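/- Let C > 0, Δ > 0, and L > 0 be real numbers satisfying e^{CL} < 1 + CΔ/2. Suppose ρ : ℝ → ℝ is differentiable on [0, L], ρ(0) = 1/2, and ρ′(x) ≥ −C ρ(x) − 1/Δ for all x ∈ [0, L]. Then ρ(x) > 0 for all x ∈ [0, L]; more precisely, e^{Cx} ρ(x) − 1/2 ≥ (1 − e^{Cx})/(CΔ) for all x ∈ [0, L]. -/

import Mathlib

/-- Let `C, Δ, L > 0` satisfy `e^{CL} < 1 + CΔ/2`. Suppose `ρ : ℝ → ℝ` is
differentiable on `[0, L]`, `ρ 0 = 1/2`, and `ρ′(x) ≥ −C ρ(x) − 1/Δ` for all `x ∈ [0, L]`.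
Then `ρ(x) > 0` for all `x ∈ [0, L]`; more precisely,
`e^{Cx} ρ(x) − 1/2 ≥ (1 − e^{Cx})/(CΔ)` for all `x ∈ [0, L]`. -/
theorem stmt10 (C Δ L : ℝ) (hC : 0 < C) (hΔ : 0 < Δ) (hL : 0 < L)
    (hCL : Real.exp (C * L) < 1 + C * Δ / 2)
    (ρ : ℝ → ℝ) (hρ : DifferentiableOn ℝ ρ (Set.Icc 0 L))
    (hρ0 : ρ 0 = 1 / 2)
    (hineq : ∀ x ∈ Set.Icc (0 : ℝ) L,
      -C * ρ x - 1 / Δ ≤ derivWithin ρ (Set.Icc 0 L) x) :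
    ∀ x ∈ Set.Icc (0 : ℝ) L,
      0 < ρ x ∧ (1 - Real.exp (C * x)) / (C * Δ) ≤ Real.exp (C * x) * ρ x - 1 / 2 := by
  have hCΔ : 0 < C * Δ := mul_pos hC hΔ
  set g : ℝ → ℝ := fun x => Real.exp (C * x) * ρ x + (Real.exp (C * x) - 1) / (C * Δ) with hgdef
  have hEcont : Continuous fun x : ℝ => Real.exp (C * x) :=
    Real.continuous_exp.comp (continuous_const.mul continuous_id)
  have hmono : MonotoneOn g (Set.Icc 0 L) := by
    apply monotoneOn_of_deriv_nonneg (convex_Icc 0 L)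
    · exact ((hEcont.continuousOn.mul hρ.continuousOn).add
        (((hEcont.sub continuous_const).div_const _).continuousOn))
    all_goals {
      intro x hx
      rw [interior_Icc] at hx
      have hxI : x ∈ Set.Icc (0 : ℝ) L := Set.Ioo_subset_Icc_self hx
      have hmem : Set.Icc (0 : ℝ) L ∈ nhds x := Icc_mem_nhds hx.1 hx.2
      have hρx : DifferentiableAt ℝ ρ x := (hρ x hxI).differentiableAt hmem
      have hdw : derivWithin ρ (Set.Icc 0 L) x = deriv ρ x := derivWithin_of_mem_nhds hmem
      have hρd : HasDerivAt ρ (derivWithin ρ (Set.Icc 0 L) x) x := by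
        rw [hdw]; exact hρx.hasDerivAt
      have hCx : HasDerivAt (fun x : ℝ => C * x) C x := by
        simpa using (hasDerivAt_id x).const_mul C
      have hE : HasDerivAt (fun x : ℝ => Real.exp (C * x)) (Real.exp (C * x) * C) x :=
        (Real.hasDerivAt_exp (C * x)).comp x hCx
      have hgd : HasDerivAt g
          (Real.exp (C * x) * C * ρ x + Real.exp (C * x) * derivWithin ρ (Set.Icc 0 L) x
            + (Real.exp (C * x) * C) / (C * Δ)) x := by
        exact (hE.mul hρd).add ((hE.sub_const 1).div_const (C * Δ))
      first
        | exact hgd.differentiableAt.differentiableWithinAt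
        | · rw [hgd.deriv]
            have h1 := hineq x hxI
            have he : 0 < Real.exp (C * x) := Real.exp_pos _
            have h2 : Real.exp (C * x) * C / (C * Δ) = Real.exp (C * x) * (1 / Δ) := by
              field_simp
            rw [h2]
            have h4 : Real.exp (C * x) * (-C * ρ x - 1 / Δ)
                ≤ Real.exp (C * x) * derivWithin ρ (Set.Icc 0 L) x :=
              mul_le_mul_of_nonneg_left h1 he.le
            nlinarith [h4]
    }
  intro x hx
  have hg0 : g 0 = 1 / 2 := by
    simp [hgdef, hρ0]
  have hkey : g 0 ≤ g x := hmono (Set.left_mem_Icc.mpr hL.le) hx (hx.1)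
  rw [hg0] at hkey
  have he : 0 < Real.exp (C * x) := Real.exp_pos _
  have hineq2 : (1 - Real.exp (C * x)) / (C * Δ) ≤ Real.exp (C * x) * ρ x - 1 / 2 := by
    have : (1 - Real.exp (C * x)) / (C * Δ) = -((Real.exp (C * x) - 1) / (C * Δ)) := by ring
    rw [this]
    simp only [hgdef] at hkey
    linarith
  refine ⟨?_, hineq2⟩
  have hle : Real.exp (C * x) ≤ Real.exp (C * L) :=
    Real.exp_le_exp.mpr (mul_le_mul_of_nonneg_left hx.2 hC.le)
  have hlt : (Real.exp (C * x) - 1) / (C * Δ) < 1 / 2 := by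
    rw [div_lt_iff₀ hCΔ]
    nlinarith
  have hmul : 0 < Real.exp (C * x) * ρ x := by
    have : (1 - Real.exp (C * x)) / (C * Δ) = -((Real.exp (C * x) - 1) / (C * Δ)) := by ring
    rw [this] at hineq2
    linarith
  have : ρ x = (Real.exp (C * x) * ρ x) / Real.exp (C * x) := by
    field_simp
  rw [this]
  exact div_pos hmul he
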